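/- Assume that f > 0 holds q-almost everywhere and that z ↦ log f(z) and z ↦ log (dq/dp₀)(z) are q-integrable. Let π be the posterior probability measure on Z defined by dπ/dp₀ = f / ∫_Z f dp₀. Then q is absolutely continuous with respect to π, the function log (dq/dπ) is q-integrable, and log ∫_Z f dp₀ − ( ∫_Z log f dq − KL(q‖p₀) ) = KL(q‖π). In particular, the variational lower bound ∫ log f dq − KL(q‖p₀) equals the log-evidence log ∫ f dp₀ if and only if KL(q‖π) = 0, which holds if and only if q = π. -/

import Mathlib

/-!
STATEMENT 3: The gap between the log-evidence and the variational lower bound equals the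
Kullback–Leibler divergence from the variational distribution to the posterior; the bound
is tight iff `q` equals the posterior.

Context: `Z` is a measurable space, `p₀` and `q` are probability measures on `Z` with
`q ≪ p₀`, and `f : Z → [0,∞)` is measurable with `0 < ∫ f dp₀ < ∞` (finiteness is captured
by `Integrable f p₀`).  The Kullback–Leibler divergence is `KL(q‖p₀) = ∫ log (dq/dp₀) dq`.
The posterior `π` is defined by `dπ/dp₀ = f / ∫ f dp₀`.
-/

open MeasureTheory
open scoped ENNReal

/-- Gibbs' inequality equality case: for probability measures `q ≪ π` with integrable
log-likelihood ratio, the KL divergence vanishes iff `q = π`. -/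
lemma gibbs_eq_iff {Z : Type*} [MeasurableSpace Z] (q π : Measure Z)
    [IsProbabilityMeasure q] [IsProbabilityMeasure π] (hqπ : q ≪ π)
    (h_int : Integrable (fun z => Real.log ((q.rnDeriv π) z).toReal) q) :
    (∫ z, Real.log ((q.rnDeriv π) z).toReal ∂q = 0) ↔ q = π := by
  constructor
  · intro h0
    set r : Z → ℝ := fun z => (π.rnDeriv q z).toReal with hr
    have h_ae : ∀ᵐ z ∂q, π.rnDeriv q z = (q.rnDeriv π z)⁻¹ ∧ 0 < q.rnDeriv π z ∧
        q.rnDeriv π z < ∞ := by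
      filter_upwards [Measure.inv_rnDeriv hqπ, Measure.rnDeriv_pos hqπ,
        hqπ.ae_le (Measure.rnDeriv_lt_top q π)] with z h1 h2 h3
      exact ⟨h1.symm, h2, h3⟩
    have h_log : (fun z => Real.log (r z)) =ᵐ[q]
        fun z => - Real.log ((q.rnDeriv π) z).toReal := by
      filter_upwards [h_ae] with z ⟨h1, h2, h3⟩
      rw [hr]
      simp only [h1, ENNReal.toReal_inv, Real.log_inv]
    have h_pos : ∀ᵐ z ∂q, 0 < r z := by
      filter_upwards [h_ae] with z ⟨h1, h2, h3⟩
      rw [hr]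
      simp only [h1, ENNReal.toReal_inv]
      exact inv_pos.mpr (ENNReal.toReal_pos h2.ne' h3.ne)
    have h_r_int : Integrable r q := Measure.integrable_toReal_rnDeriv
    have h_logr_int : Integrable (fun z => Real.log (r z)) q :=
      h_int.neg.congr h_log.symm
    have h_r_le : ∫ z, r z ∂q ≤ 1 := by
      rw [hr, integral_toReal (Measure.measurable_rnDeriv π q).aemeasurable
        (Measure.rnDeriv_lt_top π q)]
      calc (∫⁻ z, π.rnDeriv q z ∂q).toReal ≤ (π Set.univ).toReal :=
            ENNReal.toReal_mono (measure_ne_top _ _) Measure.lintegral_rnDeriv_le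
        _ = 1 := by simp
    set G : Z → ℝ := fun z => r z - 1 - Real.log (r z) with hG
    have hG_nonneg : ∀ᵐ z ∂q, 0 ≤ G z := by
      filter_upwards [h_pos] with z hz
      have := Real.log_le_sub_one_of_pos hz
      simp only [hG]; linarith
    have hi1 : Integrable (fun z => r z - 1) q := h_r_int.sub (integrable_const 1)
    have hG_int : Integrable G q := hi1.sub h_logr_int
    have h_logr0 : ∫ z, Real.log (r z) ∂q = 0 := by
      rw [integral_congr_ae h_log, integral_neg, h0, neg_zero]
    have hG_integral : ∫ z, G z ∂q = ∫ z, r z ∂q - 1 := by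
      simp only [hG]
      rw [integral_sub hi1 h_logr_int,
        integral_sub h_r_int (integrable_const 1), h_logr0, integral_const]
      simp
    have hG0 : ∫ z, G z ∂q = 0 :=
      le_antisymm (by rw [hG_integral]; linarith) (integral_nonneg_of_ae hG_nonneg)
    have hG_ae : G =ᵐ[q] 0 := (integral_eq_zero_iff_of_nonneg_ae hG_nonneg hG_int).mp hG0
    have h_req : ∀ᵐ z ∂q, r z = 1 := by
      filter_upwards [hG_ae, h_pos] with z hz hpos
      by_contra hne
      have := Real.log_lt_sub_one_of_pos hpos hne
      simp only [hG, Pi.zero_apply] at hz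
      linarith
    have h_one : π.rnDeriv q =ᵐ[q] 1 := by
      filter_upwards [h_req, Measure.rnDeriv_lt_top π q] with z hz hlt
      have : (π.rnDeriv q z).toReal = (1 : ℝ≥0∞).toReal := by simpa using hz
      exact (ENNReal.toReal_eq_toReal_iff' hlt.ne (by simp)).mp this
    have hwd : q.withDensity (π.rnDeriv q) = q := by
      rw [withDensity_congr_ae h_one, withDensity_one]
    have hdec := (π.haveLebesgueDecomposition_add q)
    rw [hwd] at hdec
    have hs : π.singularPart q Set.univ = 0 := by
      have h1 : π Set.univ = π.singularPart q Set.univ + q Set.univ := by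
        conv_lhs => rw [hdec]
        rfl
      simp only [measure_univ] at h1
      have h2 : 1 + π.singularPart q Set.univ = 1 + 0 := by
        rw [add_comm 1 (π.singularPart q Set.univ), add_zero]
        exact h1.symm
      exact (ENNReal.add_right_inj (by simp)).mp h2
    have hs0 : π.singularPart q = 0 := Measure.measure_univ_eq_zero.mp hs
    rw [hs0, zero_add] at hdec
    exact hdec.symm
  · intro h
    subst h
    rw [integral_congr_ae (g := fun _ => (0:ℝ)) ?_, integral_zero]
    filter_upwards [Measure.rnDeriv_self q] with z hz
    simp [hz]


/-- Kullback–Leibler divergence `KL(q‖p) = ∫ log (dq/dp) dq` (real-valued, for the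
absolutely continuous, integrable case). -/
noncomputable def klReal {Z : Type*} [MeasurableSpace Z] (q p : Measure Z) : ℝ :=
  ∫ z, Real.log ((q.rnDeriv p) z).toReal ∂q

/-- The posterior measure `π` with `dπ/dp₀ = f / ∫ f dp₀`. -/
noncomputable def posterior {Z : Type*} [MeasurableSpace Z] (p₀ : Measure Z) (f : Z → ℝ) :
    Measure Z :=
  p₀.withDensity fun z => ENNReal.ofReal (f z / ∫ z', f z' ∂p₀)

/-- `q ≪ π`, `log (dq/dπ)` is `q`-integrable, the gap `log ∫ f dp₀ − ELBO` equals
`KL(q‖π)`, and the bound is tight iff `KL(q‖π) = 0` iff `q = π`. -/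
theorem stmt_3 {Z : Type*} [MeasurableSpace Z] (p₀ q : Measure Z)
    [IsProbabilityMeasure p₀] [IsProbabilityMeasure q] (hqp : q ≪ p₀)
    (f : Z → ℝ) (hf_meas : Measurable f) (hf_nonneg : ∀ z, 0 ≤ f z)
    (hf_int : Integrable f p₀) (hf_ev_pos : 0 < ∫ z, f z ∂p₀)
    (hf_pos : ∀ᵐ z ∂q, 0 < f z)
    (hlogf_int : Integrable (fun z => Real.log (f z)) q)
    (hlogr_int : Integrable (fun z => Real.log ((q.rnDeriv p₀) z).toReal) q) :
    q ≪ posterior p₀ f ∧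
    Integrable (fun z => Real.log ((q.rnDeriv (posterior p₀ f)) z).toReal) q ∧
    Real.log (∫ z, f z ∂p₀) - (∫ z, Real.log (f z) ∂q - klReal q p₀) =
      klReal q (posterior p₀ f) ∧
    ((∫ z, Real.log (f z) ∂q - klReal q p₀ = Real.log (∫ z, f z ∂p₀)) ↔
      klReal q (posterior p₀ f) = 0) ∧
    (klReal q (posterior p₀ f) = 0 ↔ q = posterior p₀ f) := by
  simp only [posterior]
  set c : ℝ := ∫ z, f z ∂p₀ with hc
  have hc0 : c ≠ 0 := ne_of_gt hf_ev_pos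
  set g : Z → ℝ≥0∞ := fun z => ENNReal.ofReal (f z / c) with hg
  have hg_meas : Measurable g := (hf_meas.div_const c).ennreal_ofReal
  set π : Measure Z := p₀.withDensity g with hπ
  have hπ_prob : IsProbabilityMeasure π := by
    constructor
    rw [hπ, withDensity_apply _ MeasurableSet.univ, setLIntegral_univ, hg,
      ← ofReal_integral_eq_lintegral_ofReal (hf_int.div_const c)
        (Filter.Eventually.of_forall fun z => div_nonneg (hf_nonneg z) hf_ev_pos.le)]
    rw [integral_div, ← hc, div_self hc0]
    simp
  -- rnDeriv of q wrt p₀ vanishes a.e. where f = 0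
  have h_zero : ∀ᵐ z ∂p₀, f z = 0 → q.rnDeriv p₀ z = 0 := by
    have hs : MeasurableSet {z | f z = 0} := hf_meas (measurableSet_singleton 0)
    have hq0 : q {z | f z = 0} = 0 :=
      measure_mono_null (fun z hz => by simp only [Set.mem_setOf_eq] at hz ⊢; simp [hz])
        (ae_iff.mp hf_pos)
    have hl : ∫⁻ z in {z | f z = 0}, q.rnDeriv p₀ z ∂p₀ = 0 := by
      rw [Measure.setLIntegral_rnDeriv' hqp hs, hq0]
    have := (lintegral_eq_zero_iff (Measure.measurable_rnDeriv q p₀)).mp hl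
    exact (ae_restrict_iff' hs).mp this
  set h : Z → ℝ≥0∞ := fun z => if f z = 0 then 0 else (g z)⁻¹ * q.rnDeriv p₀ z with hh
  have hh_meas : Measurable h :=
    Measurable.ite (hf_meas (measurableSet_singleton 0)) measurable_const
      (hg_meas.inv.mul (Measure.measurable_rnDeriv q p₀))
  have hA : (fun z => (g * h) z) =ᵐ[p₀] q.rnDeriv p₀ := by
    filter_upwards [h_zero] with z hz
    by_cases hfz : f z = 0
    · simp [hh, hg, hfz, hz hfz]
    · have hfpos : 0 < f z := (hf_nonneg z).lt_of_ne (Ne.symm hfz)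
      have hg0 : g z ≠ 0 := by
        simp only [hg, ne_eq, ENNReal.ofReal_eq_zero, not_le]
        exact div_pos hfpos hf_ev_pos
      have hgtop : g z ≠ ∞ := ENNReal.ofReal_ne_top
      simp only [Pi.mul_apply, hh, if_neg hfz, ← mul_assoc,
        ENNReal.mul_inv_cancel hg0 hgtop, one_mul]
  have hq_eq : q = π.withDensity h := by
    rw [hπ, ← withDensity_mul _ hg_meas hh_meas,
      withDensity_congr_ae hA, Measure.withDensity_rnDeriv_eq q p₀ hqp]
  have hqπ : q ≪ π := hq_eq ▸ withDensity_absolutelyContinuous π h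
  have h_rnq : q.rnDeriv π =ᵐ[q] h := by
    refine hqπ.ae_le ?_
    rw [hq_eq]
    exact Measure.rnDeriv_withDensity π hh_meas
  have h_llr : (fun z => Real.log ((q.rnDeriv π) z).toReal) =ᵐ[q]
      fun z => Real.log ((q.rnDeriv p₀) z).toReal - Real.log (f z) + Real.log c := by
    filter_upwards [h_rnq, hf_pos, Measure.rnDeriv_pos hqp,
      hqp.ae_le (Measure.rnDeriv_lt_top q p₀)] with z h1 h2 h3 h4
    have hfz : f z ≠ 0 := h2.ne'
    have hdivpos : 0 < f z / c := div_pos h2 hf_ev_pos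
    rw [h1]
    simp only [hh, if_neg hfz]
    rw [ENNReal.toReal_mul, ENNReal.toReal_inv, hg, ENNReal.toReal_ofReal hdivpos.le,
      Real.log_mul (by positivity) (ENNReal.toReal_pos h3.ne' h4.ne).ne',
      Real.log_inv, Real.log_div hfz hc0]
    ring
  have h_int2 : Integrable (fun z => Real.log ((q.rnDeriv π) z).toReal) q :=
    (((hlogr_int.sub hlogf_int)).add (integrable_const (Real.log c))).congr h_llr.symm
  have h_kl : klReal q π = klReal q p₀ - ∫ z, Real.log (f z) ∂q + Real.log c := by
    have hi : Integrable (fun z => Real.log ((q.rnDeriv p₀) z).toReal - Real.log (f z)) q :=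
      hlogr_int.sub hlogf_int
    rw [klReal, integral_congr_ae h_llr, integral_add hi (integrable_const _),
      integral_sub hlogr_int hlogf_int, integral_const, probReal_univ]
    rw [klReal]
    simp
  refine ⟨hqπ, h_int2, by rw [h_kl]; ring, ?_, ?_⟩
  · constructor <;> intro hh1 <;> linarith [h_kl]
  · rw [show klReal q π = ∫ z, Real.log ((q.rnDeriv π) z).toReal ∂q from rfl]
    exact gibbs_eq_iff q π hqπ h_int2
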